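/- Let X be a real Banach space and δ > 0. If a bounded δ-Rademacher tree grows in X, then X fails the complete continuity property. Equivalently, if T : L¹[0,1] → X is a bounded linear operator such that ‖Σ_{k=1}^{2^n} T h̃_{2^n+k}‖ ≥ 2^n δ for all n ≥ 0, where {h̃_j} is the standard Haar system, then T is not completely continuous. -/

import Mathlib

open MeasureTheory Filter Topology

noncomputable section

/-- Lebesgue measure restricted to `[0,1]`. -/
abbrev μ01 : Measure ℝ := MeasureTheory.volume.restrict (Set.Icc 0 1)

/-- The space `L¹[0,1]`. -/
abbrev L1 : Type := Lp ℝ 1 μ01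

lemma μ01_ne_top (s : Set ℝ) : μ01 s ≠ ⊤ := by
  refine ne_of_lt (lt_of_le_of_lt (measure_mono (Set.subset_univ s)) ?_)
  rw [Measure.restrict_apply_univ, Real.volume_Icc]
  norm_num

open Classical in
/-- The indicator function `1ₛ` as an element of `L¹[0,1]`. -/
def indL1 (s : Set ℝ) : L1 :=
  if h : MeasurableSet s then indicatorConstLp 1 h (μ01_ne_top s) (1:ℝ) else 0

/-- An operator `T : L¹[0,1] → Y` is completely continuous if it maps weakly
convergent sequences to norm convergent sequences. -/
def CompletelyContinuous {Y : Type*} [NormedAddCommGroup Y] [NormedSpace ℝ Y]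
    (T : L1 →L[ℝ] Y) : Prop :=
  ∀ (f : ℕ → L1) (f₀ : L1),
    (∀ φ : L1 →L[ℝ] ℝ, Tendsto (fun t => φ (f t)) atTop (𝓝 (φ f₀))) →
    Tendsto (fun t => T (f t)) atTop (𝓝 (T f₀))

/-- The dyadic interval `I n k = [(k-1)/2^n, k/2^n)`. -/
def dyadicI (n k : ℕ) : Set ℝ := Set.Ico (((k : ℝ) - 1) / 2 ^ n) ((k : ℝ) / 2 ^ n)

/-- The standard (L¹-normalized) Haar system on `[0,1]`: `h̃ 1 = 1_{[0,1]}` and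
`h̃ (2^n + k) = 2^n (1_{I^{n+1}_{2k-1}} - 1_{I^{n+1}_{2k}})` for `n ≥ 0`, `1 ≤ k ≤ 2^n`
(for `j ≥ 2` we have `j = 2^n + k` with `n = Nat.log2 (j-1)`). -/
def stdHaar : ℕ → L1 := fun j =>
  if j = 1 then indL1 (Set.Icc 0 1)
  else
    let n := Nat.log2 (j - 1)
    let k := j - 2 ^ n
    (2 ^ n : ℝ) • (indL1 (dyadicI (n+1) (2*k-1)) - indL1 (dyadicI (n+1) (2*k)))


instance : IsProbabilityMeasure μ01 := by
  constructor
  rw [Measure.restrict_apply_univ, Real.volume_Icc]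
  norm_num

/-- dyadic interval [m/2^N, (m+1)/2^N) -/
def Jd (N m : ℕ) : Set ℝ := Set.Ico ((m : ℝ)/2^N) (((m : ℝ)+1)/2^N)

lemma Jd_subset {N m : ℕ} (hm : m < 2^N) : Jd N m ⊆ Set.Ico (0:ℝ) 1 := by
  intro x hx
  obtain ⟨h1, h2⟩ := hx
  constructor
  · exact le_trans (by positivity) h1
  · refine lt_of_lt_of_le h2 ?_
    rw [div_le_one (by positivity)]
    have : (m:ℝ) + 1 ≤ (2:ℝ)^N := by
      have : (m+1 : ℕ) ≤ 2^N := hm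
      calc ((m:ℝ)+1) = ((m+1 : ℕ) : ℝ) := by push_cast; ring
        _ ≤ ((2^N : ℕ) : ℝ) := by exact_mod_cast this
        _ = (2:ℝ)^N := by push_cast; ring
    exact this

lemma mem_Jd_iff {N m : ℕ} {x : ℝ} (hx : 0 ≤ x) :
    x ∈ Jd N m ↔ ⌊(2:ℝ)^N * x⌋₊ = m := by
  rw [Nat.floor_eq_iff (by positivity)]
  constructor
  · rintro ⟨h1, h2⟩
    constructor
    · rw [div_le_iff₀ (by positivity : (0:ℝ) < 2^N)] at h1; linarith [h1]
    · rw [lt_div_iff₀ (by positivity : (0:ℝ) < 2^N)] at h2; linarith [h2]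
  · rintro ⟨h1, h2⟩
    constructor
    · rw [div_le_iff₀ (by positivity : (0:ℝ) < 2^N)]; linarith
    · rw [lt_div_iff₀ (by positivity : (0:ℝ) < 2^N)]; linarith

lemma Jd_meas (N m : ℕ) : MeasurableSet (Jd N m) := measurableSet_Ico

lemma μ01_Jd {N m : ℕ} (hm : m < 2^N) : μ01 (Jd N m) = ENNReal.ofReal (1/2^N) := by
  rw [Measure.restrict_apply (Jd_meas N m),
    Set.inter_eq_left.mpr ((Jd_subset hm).trans Set.Ico_subset_Icc_self),
    Jd, Real.volume_Ico]
  congr 1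
  field_simp
  ring

def stepF (N : ℕ) (c : ℕ → ℝ) : ℝ → ℝ := fun x =>
  ∑ m ∈ Finset.range (2^N), c m * (Jd N m).indicator (fun _ => (1:ℝ)) x

lemma stepF_eval_mem {N : ℕ} {c : ℕ → ℝ} {x : ℝ} (hx : x ∈ Set.Ico (0:ℝ) 1) :
    stepF N c x = c ⌊(2:ℝ)^N * x⌋₊ := by
  set m0 := ⌊(2:ℝ)^N * x⌋₊ with hm0
  have hmem : x ∈ Jd N m0 := (mem_Jd_iff hx.1).2 rfl
  have hlt : m0 < 2^N := by
    have : (2:ℝ)^N * x < 2^N * 1 := by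
      have := hx.2; nlinarith [pow_pos (zero_lt_two (α := ℝ)) N]
    have h2 : ((2:ℝ))^N * x < ((2^N : ℕ) : ℝ) := by push_cast; linarith
    exact Nat.floor_lt (mul_nonneg (by positivity) hx.1) |>.2 h2
  rw [stepF]
  rw [Finset.sum_eq_single m0]
  · rw [Set.indicator_of_mem hmem]; ring
  · intro b hb hne
    have : x ∉ Jd N b := fun hxb => hne (((mem_Jd_iff hx.1).1 hxb).symm ▸ rfl)
    rw [Set.indicator_of_notMem this]; ring
  · intro hnot
    exact absurd (Finset.mem_range.2 hlt) hnot

lemma stepF_eval_not_mem {N : ℕ} {c : ℕ → ℝ} {x : ℝ} (hx : x ∉ Set.Ico (0:ℝ) 1) :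
    stepF N c x = 0 := by
  rw [stepF]
  refine Finset.sum_eq_zero fun m hm => ?_
  rw [Set.indicator_of_notMem (fun hxm => hx (Jd_subset (Finset.mem_range.1 hm) hxm))]
  ring

lemma memℒp_ind {N m : ℕ} (hm : m < 2^N) (p : ENNReal) :
    MemLp ((Jd N m).indicator (fun _ => (1:ℝ))) p μ01 :=
  memLp_indicator_const p (Jd_meas N m) 1 (Or.inr (by
    rw [μ01_Jd hm]; exact ENNReal.ofReal_ne_top))

lemma memℒp_stepF (N : ℕ) (c : ℕ → ℝ) (p : ENNReal) : MemLp (stepF N c) p μ01 := by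
  unfold stepF
  exact memLp_finsetSum _ (fun m hm =>
    (memℒp_ind (Finset.mem_range.1 hm) p).const_mul (c m))

lemma integrable_stepF (N : ℕ) (c : ℕ → ℝ) : Integrable (stepF N c) μ01 :=
  memLp_one_iff_integrable.1 (memℒp_stepF N c 1)

lemma integrable_ind {N m : ℕ} (hm : m < 2^N) :
    Integrable ((Jd N m).indicator (fun _ => (1:ℝ))) μ01 :=
  memLp_one_iff_integrable.1 (memℒp_ind hm 1)

lemma integral_stepF (N : ℕ) (c : ℕ → ℝ) :
    ∫ x, stepF N c x ∂μ01 = (∑ m ∈ Finset.range (2^N), c m) / 2^N := by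
  unfold stepF
  rw [integral_finset_sum _ (fun m hm =>
    (integrable_ind (Finset.mem_range.1 hm)).const_mul (c m))]
  rw [Finset.sum_div]
  refine Finset.sum_congr rfl (fun m hm => ?_)
  rw [integral_const_mul, integral_indicator_const (1:ℝ) (Jd_meas N m),
    measureReal_def, μ01_Jd (Finset.mem_range.1 hm), ENNReal.toReal_ofReal (by positivity)]
  rw [smul_eq_mul]
  ring

/-- the Rademacher-type function at level t -/
def rade (t : ℕ) : ℝ → ℝ := stepF (t+1) (fun m => (-1:ℝ)^m)

lemma floor_pow_div {s t : ℕ} (hst : s ≤ t) {x : ℝ} (hx : 0 ≤ x) :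
    ⌊(2:ℝ)^(s+1) * x⌋₊ = ⌊(2:ℝ)^(t+1) * x⌋₊ / 2^(t-s) := by
  rw [← Nat.floor_div_natCast]
  congr 1
  push_cast
  rw [eq_div_iff (by positivity), mul_right_comm, ← pow_add]
  have h1 : s + 1 + (t-s) = t + 1 := by omega
  rw [h1]

lemma rade_mul_rade {s t : ℕ} (hst : s ≤ t) :
    (fun x => rade s x * rade t x) =
      stepF (t+1) (fun m => (-1:ℝ)^(m / 2^(t-s)) * (-1:ℝ)^m) := by
  funext x
  by_cases hx : x ∈ Set.Ico (0:ℝ) 1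
  · rw [rade, rade, stepF_eval_mem hx, stepF_eval_mem hx, stepF_eval_mem hx,
      floor_pow_div hst hx.1]
  · rw [rade, rade, stepF_eval_not_mem hx, stepF_eval_not_mem hx,
      stepF_eval_not_mem hx, zero_mul]

lemma sum_pair (N : ℕ) (f : ℕ → ℝ) :
    ∑ m ∈ Finset.range (2*N), f m = ∑ j ∈ Finset.range N, (f (2*j) + f (2*j+1)) := by
  induction N with
  | zero => simp
  | succ n ih =>
    rw [Nat.mul_succ, Finset.sum_range_succ, Finset.sum_range_succ, Finset.sum_range_succ, ← ih]
    ring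

lemma integral_rade_self (t : ℕ) : ∫ x, rade t x * rade t x ∂μ01 = 1 := by
  rw [show (fun x => rade t x * rade t x) = _ from rade_mul_rade le_rfl]
  rw [integral_stepF]
  have : ∀ m ∈ Finset.range (2^(t+1)), (-1:ℝ)^(m / 2^(t-t)) * (-1:ℝ)^m = 1 := by
    intro m _
    simp [Nat.sub_self, pow_zero, Nat.div_one, ← pow_add]
  rw [Finset.sum_congr rfl this, Finset.sum_const, Finset.card_range]
  simp

lemma integral_rade_orth {s t : ℕ} (hst : s < t) : ∫ x, rade s x * rade t x ∂μ01 = 0 := by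
  rw [show (fun x => rade s x * rade t x) = _ from rade_mul_rade hst.le]
  rw [integral_stepF]
  have h2 : 2^(t+1) = 2 * 2^t := by ring
  rw [h2, sum_pair]
  have : ∀ j ∈ Finset.range (2^t),
      ((-1:ℝ)^((2*j) / 2^(t-s)) * (-1:ℝ)^(2*j) +
       (-1:ℝ)^((2*j+1) / 2^(t-s)) * (-1:ℝ)^(2*j+1)) = 0 := by
    intro j _
    have hd : t - s = (t - s - 1) + 1 := by omega
    have hq : (2*j) / 2^(t-s) = (2*j+1) / 2^(t-s) := by
      rw [hd, pow_succ, mul_comm (2^(t-s-1)) 2, ← Nat.div_div_eq_div_mul,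
        ← Nat.div_div_eq_div_mul]
      congr 1
      omega
    rw [hq]
    simp [pow_add, pow_mul]
  rw [Finset.sum_congr rfl this, Finset.sum_const]
  simp

abbrev L2' : Type := Lp ℝ 2 μ01

def radeL1 (t : ℕ) : L1 := (memℒp_stepF (t+1) (fun m => (-1:ℝ)^m) 1).toLp
def radeL2 (t : ℕ) : L2' := (memℒp_stepF (t+1) (fun m => (-1:ℝ)^m) 2).toLp

lemma radeL1_coe (t : ℕ) : ⇑(radeL1 t) =ᵐ[μ01] rade t := MemLp.coeFn_toLp _
lemma radeL2_coe (t : ℕ) : ⇑(radeL2 t) =ᵐ[μ01] rade t := MemLp.coeFn_toLp _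

lemma inner_radeL2 (s t : ℕ) :
    (inner ℝ (radeL2 s) (radeL2 t) : ℝ) = ∫ x, rade s x * rade t x ∂μ01 := by
  rw [MeasureTheory.L2.inner_def]
  refine integral_congr_ae ?_
  filter_upwards [radeL2_coe s, radeL2_coe t] with x h1 h2
  rw [h1, h2]
  simp [RCLike.inner_apply]
  ring

lemma orthonormal_radeL2 : Orthonormal ℝ radeL2 := by
  rw [orthonormal_iff_ite]
  intro s t
  by_cases hst : s = t
  · subst hst
    rw [inner_radeL2, integral_rade_self, if_pos rfl]
  · rw [if_neg hst, inner_radeL2]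
    rcases lt_or_gt_of_ne hst with h | h
    · exact integral_rade_orth h
    · rw [show (fun x => rade s x * rade t x) = fun x => rade t x * rade s x from
        funext fun x => mul_comm _ _]
      exact integral_rade_orth h

/-- inclusion L2 → L1 -/
def incl21 : L2' →L[ℝ] L1 :=
  LinearMap.mkContinuous
    { toFun := fun f => ((Lp.memLp f).mono_exponent
        (by norm_num : (1:ENNReal) ≤ 2)).toLp
      map_add' := by
        intro f g
        refine Lp.ext ?_
        filter_upwards [MemLp.coeFn_toLp ((Lp.memLp (f+g)).mono_exponent
            (by norm_num : (1:ENNReal) ≤ 2)),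
          MemLp.coeFn_toLp ((Lp.memLp f).mono_exponent
            (by norm_num : (1:ENNReal) ≤ 2)),
          MemLp.coeFn_toLp ((Lp.memLp g).mono_exponent
            (by norm_num : (1:ENNReal) ≤ 2)),
          Lp.coeFn_add f g,
          Lp.coeFn_add (((Lp.memLp f).mono_exponent
            (by norm_num : (1:ENNReal) ≤ 2)).toLp)
            (((Lp.memLp g).mono_exponent (by norm_num : (1:ENNReal) ≤ 2)).toLp)]
          with x h1 h2 h3 h4 h5
        rw [h1, h5, h4]
        simp [h2, h3]
      map_smul' := by
        intro c f
        refine Lp.ext ?_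
        filter_upwards [MemLp.coeFn_toLp ((Lp.memLp (c • f)).mono_exponent
            (by norm_num : (1:ENNReal) ≤ 2)),
          MemLp.coeFn_toLp ((Lp.memLp f).mono_exponent
            (by norm_num : (1:ENNReal) ≤ 2)),
          Lp.coeFn_smul c f,
          Lp.coeFn_smul c (((Lp.memLp f).mono_exponent
            (by norm_num : (1:ENNReal) ≤ 2)).toLp)]
          with x h1 h2 h3 h4
        simp only [RingHom.id_apply]
        rw [h1, h4]
        simp [h2, h3]
    } 1
    (by
      intro f
      rw [one_mul]
      have hf1 : MemLp (⇑f) 1 μ01 :=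
        (Lp.memLp f).mono_exponent (by norm_num : (1:ENNReal) ≤ 2)
      show ‖MemLp.toLp ⇑f hf1‖ ≤ ‖f‖
      calc ‖MemLp.toLp ⇑f hf1‖ = (eLpNorm ⇑f 1 μ01).toReal := Lp.norm_toLp ⇑f hf1
        _ ≤ (eLpNorm ⇑f 2 μ01).toReal :=
            ENNReal.toReal_mono (Lp.eLpNorm_ne_top f)
              (eLpNorm_le_eLpNorm_of_exponent_le (by norm_num)
                (Lp.aestronglyMeasurable f))
        _ = ‖f‖ := (Lp.norm_def f).symm)

lemma incl21_coe (f : L2') : ⇑(incl21 f) =ᵐ[μ01] ⇑f :=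
  MemLp.coeFn_toLp ((Lp.memLp f).mono_exponent (by norm_num : (1:ENNReal) ≤ 2))

lemma incl21_radeL2 (t : ℕ) : incl21 (radeL2 t) = radeL1 t := by
  refine Lp.ext ?_
  filter_upwards [incl21_coe (radeL2 t), radeL2_coe t, radeL1_coe t] with x h1 h2 h3
  rw [h1, h2, h3]

lemma indL1_coe {s : Set ℝ} (hs : MeasurableSet s) :
    ⇑(indL1 s) =ᵐ[μ01] s.indicator (fun _ => (1:ℝ)) := by
  rw [indL1, dif_pos hs]
  exact indicatorConstLp_coeFn

lemma dyadicI_eq_Jd {n m : ℕ} (hm : 1 ≤ m) : dyadicI n m = Jd n (m-1) := by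
  rw [dyadicI, Jd]
  have h : ((m-1 : ℕ) : ℝ) = (m : ℝ) - 1 := by
    rw [Nat.cast_sub hm, Nat.cast_one]
  rw [h]
  congr 1
  ring

lemma stdHaar_eq {t k : ℕ} (hk : k ∈ Finset.Icc 1 (2^t)) :
    stdHaar (2^t + k) =
      (2^t : ℝ) • (indL1 (Jd (t+1) (2*k-2)) - indL1 (Jd (t+1) (2*k-1))) := by
  obtain ⟨hk1, hk2⟩ := Finset.mem_Icc.1 hk
  have h1 : 2^t + k ≠ 1 := by have := Nat.one_le_two_pow (n := t); omega
  have hlog : Nat.log2 (2^t + k - 1) = t := by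
    rw [Nat.log2_eq_log_two]
    refine Nat.log_eq_of_pow_le_of_lt_pow ?_ ?_
    · omega
    · have : 2^(t+1) = 2^t + 2^t := by ring
      omega
  rw [stdHaar]
  rw [if_neg h1]
  simp only [hlog]
  have hsub : 2^t + k - 2^t = k := by omega
  rw [hsub]
  rw [dyadicI_eq_Jd (by omega : 1 ≤ 2*k-1), dyadicI_eq_Jd (by omega : 1 ≤ 2*k)]
  have e1 : 2*k - 1 - 1 = 2*k - 2 := by omega
  have e2 : 2*k - 1 = 2*k - 1 := rfl
  rw [e1]

lemma coeFn_sum' {ι : Type*} (s : Finset ι) (f : ι → L1) :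
    ⇑(∑ i ∈ s, f i) =ᵐ[μ01] fun x => ∑ i ∈ s, f i x := by
  classical
  induction s using Finset.induction with
  | empty =>
    simp only [Finset.sum_empty]
    filter_upwards [Lp.coeFn_zero (E := ℝ) (p := 1) (μ := μ01)] with x hx
    simpa using hx
  | @insert a s' hnot ih =>
    rw [Finset.sum_insert hnot]
    filter_upwards [Lp.coeFn_add (f a) (∑ i ∈ s', f i), ih] with x h1 h2
    rw [h1]
    simp only [Pi.add_apply, Finset.sum_insert hnot, h2]

lemma rade_eq_sum (t : ℕ) (x : ℝ) :
    rade t x = ∑ k ∈ Finset.Icc 1 (2^t),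
      ((Jd (t+1) (2*k-2)).indicator (fun _ => (1:ℝ)) x
        - (Jd (t+1) (2*k-1)).indicator (fun _ => (1:ℝ)) x) := by
  rw [rade, stepF]
  have h2 : 2^(t+1) = 2 * 2^t := by ring
  rw [h2, sum_pair]
  rw [← Finset.Ico_add_one_right_eq_Icc, Finset.sum_Ico_eq_sum_range]
  refine Finset.sum_congr rfl (fun j hj => ?_)
  have e1 : 2*(1+j) - 2 = 2*j := by omega
  have e2 : 2*(1+j) - 1 = 2*j+1 := by omega
  have p1 : (-1:ℝ)^(2*j) = 1 := by rw [pow_mul]; norm_num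
  have p2 : (-1:ℝ)^(2*j+1) = -1 := by rw [pow_add, pow_mul]; norm_num
  rw [e1, e2, p1, p2]
  ring

lemma sum_stdHaar (t : ℕ) :
    ∑ k ∈ Finset.Icc 1 (2^t), stdHaar (2^t + k) = (2^t : ℝ) • radeL1 t := by
  rw [Finset.sum_congr rfl (fun k hk => stdHaar_eq hk), ← Finset.smul_sum]
  congr 1
  refine Lp.ext ?_
  have hae : ∀ᵐ x ∂μ01, ∀ k : ℕ,
      (indL1 (Jd (t+1) (2*k-2)) - indL1 (Jd (t+1) (2*k-1))) x
        = (Jd (t+1) (2*k-2)).indicator (fun _ => (1:ℝ)) x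
          - (Jd (t+1) (2*k-1)).indicator (fun _ => (1:ℝ)) x := by
    rw [ae_all_iff]
    intro k
    filter_upwards [Lp.coeFn_sub (indL1 (Jd (t+1) (2*k-2))) (indL1 (Jd (t+1) (2*k-1))),
      indL1_coe (Jd_meas (t+1) (2*k-2)), indL1_coe (Jd_meas (t+1) (2*k-1))] with x h1 h2 h3
    rw [h1, Pi.sub_apply, h2, h3]
  filter_upwards [coeFn_sum' (Finset.Icc 1 (2^t))
      (fun k => indL1 (Jd (t+1) (2*k-2)) - indL1 (Jd (t+1) (2*k-1))),
    hae, radeL1_coe t] with x h1 h2 h3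
  rw [h1, h3, rade_eq_sum]
  exact Finset.sum_congr rfl (fun k _ => h2 k)

/-- If a bounded δ-Rademacher tree grows in `X`, then `X` fails the CCP: if
`T : L¹[0,1] → X` satisfies `‖Σ_{k=1}^{2^n} T h̃_{2^n+k}‖ ≥ 2^n δ` for all `n`,
then `T` is not completely continuous. -/
theorem stmt6 {X : Type*} [NormedAddCommGroup X] [NormedSpace ℝ X] [CompleteSpace X]
    (T : L1 →L[ℝ] X) (δ : ℝ) (hδ : 0 < δ)
    (h : ∀ n : ℕ, (2 ^ n : ℝ) * δ ≤
      ‖∑ k ∈ Finset.Icc 1 (2 ^ n), T (stdHaar (2 ^ n + k))‖) :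
    ¬ CompletelyContinuous T := by
  intro hcc
  -- the sequence of Rademacher functions in L¹
  have hT : ∀ t : ℕ, T (radeL1 t) =
      ((2:ℝ)^t)⁻¹ • ∑ k ∈ Finset.Icc 1 (2^t), T (stdHaar (2^t + k)) := by
    intro t
    rw [← map_sum, sum_stdHaar, _root_.map_smul, smul_smul,
      inv_mul_cancel₀ (by positivity : ((2:ℝ)^t) ≠ 0), one_smul]
  have hnorm : ∀ t : ℕ, δ ≤ ‖T (radeL1 t)‖ := by
    intro t
    rw [hT t, norm_smul]
    have h2 : ‖((2:ℝ)^t)⁻¹‖ = ((2:ℝ)^t)⁻¹ := by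
      rw [Real.norm_eq_abs, abs_of_pos (by positivity)]
    rw [h2]
    calc δ = ((2:ℝ)^t)⁻¹ * ((2:ℝ)^t * δ) := by field_simp
      _ ≤ ((2:ℝ)^t)⁻¹ * ‖∑ k ∈ Finset.Icc 1 (2^t), T (stdHaar (2^t + k))‖ := by
          exact mul_le_mul_of_nonneg_left (h t) (by positivity)
  -- weak convergence to 0
  have hweak : ∀ φ : L1 →L[ℝ] ℝ,
      Tendsto (fun t => φ (radeL1 t)) atTop (𝓝 (φ 0)) := by
    intro φ
    rw [map_zero]
    have hrepr : ∀ t : ℕ, φ (radeL1 t) =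
        (inner ℝ ((InnerProductSpace.toDual ℝ L2').symm (φ.comp incl21)) (radeL2 t) : ℝ) := by
      intro t
      rw [InnerProductSpace.toDual_symm_apply]
      rw [← incl21_radeL2 t]
      rfl
    set g := (InnerProductSpace.toDual ℝ L2').symm (φ.comp incl21)
    have hsum : Summable (fun t => ‖(inner ℝ (radeL2 t) g : ℝ)‖ ^ 2) :=
      orthonormal_radeL2.inner_products_summable g
    have h0 : Tendsto (fun t => ‖(inner ℝ (radeL2 t) g : ℝ)‖ ^ 2) atTop (𝓝 0) :=
      hsum.tendsto_atTop_zero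
    have h1 : Tendsto (fun t => ‖(inner ℝ (radeL2 t) g : ℝ)‖) atTop (𝓝 0) := by
      have := (Real.continuous_sqrt.tendsto 0).comp h0
      simp only [Function.comp_def, Real.sqrt_zero] at this
      convert this using 2 with t
      rw [Real.sqrt_sq (norm_nonneg _)]
    have h2 : Tendsto (fun t => (inner ℝ (radeL2 t) g : ℝ)) atTop (𝓝 0) :=
      tendsto_zero_iff_norm_tendsto_zero.2 h1
    have h3 : Tendsto (fun t => (inner ℝ g (radeL2 t) : ℝ)) atTop (𝓝 0) := by
      convert h2 using 2 with t
      exact real_inner_comm _ _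
    simp only [hrepr]
    exact h3
  -- contradiction
  have := hcc radeL1 0 hweak
  rw [map_zero] at this
  have hlim : Tendsto (fun t => ‖T (radeL1 t)‖) atTop (𝓝 0) := by
    simpa using this.norm
  have : δ ≤ 0 := ge_of_tendsto hlim (Eventually.of_forall hnorm)
  linarith
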